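/- If a > 1 and β > 1, then P_{a,β}(z) = a·z^{β+1} − z^β + (1+a)·z − 2a is strictly increasing on (0,∞), and hence z = 1 is its unique root in (0,∞). -/

import Mathlib

noncomputable def P (a β z : ℝ) : ℝ := a * z ^ (β + 1) - z ^ β + (1 + a) * z - 2 * a

lemma young_aux {β z : ℝ} (hβ : 1 < β) (hz : 0 < z) :
    β * z ^ (β - 1) ≤ (β - 1) * z ^ β + 1 := by
  have hβ0 : 0 < β - 1 := by linarith
  have hconj : (β / (β - 1)).HolderConjugate β :=
    ((Real.holderConjugate_iff_eq_conjExponent hβ).mpr rfl).symm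
  have hmul : (β - 1) * (β / (β - 1)) = β := by field_simp
  have h2 : z ^ (β - 1) ≤ (β - 1) / β * z ^ β + 1 / β := by
    calc z ^ (β - 1) ≤ z ^ β / (β / (β - 1)) + 1 / β := by
          have := Real.young_inequality_of_nonneg (Real.rpow_nonneg hz.le (β - 1)) zero_le_one
            hconj
          rw [mul_one, ← Real.rpow_mul hz.le, hmul, Real.one_rpow] at this
          exact this
      _ = (β - 1) / β * z ^ β + 1 / β := by
          rw [div_div_eq_mul_div]; ring
  have := mul_le_mul_of_nonneg_left h2 (le_of_lt (by linarith : (0:ℝ) < β))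
  calc β * z ^ (β - 1) ≤ β * ((β - 1) / β * z ^ β + 1 / β) := this
    _ = (β - 1) * z ^ β + 1 := by field_simp

lemma P_hasDerivAt {a β z : ℝ} (hβ : 1 < β) (hz : 0 < z) :
    HasDerivAt (P a β) (a * ((β + 1) * z ^ β) - β * z ^ (β - 1) + (1 + a)) z := by
  have h1 : HasDerivAt (fun z : ℝ => z ^ (β + 1)) ((β + 1) * z ^ β) z := by
    have := Real.hasDerivAt_rpow_const (p := β + 1) (Or.inl hz.ne')
    simpa using this
  have h2 : HasDerivAt (fun z : ℝ => z ^ β) (β * z ^ (β - 1)) z :=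
    Real.hasDerivAt_rpow_const (p := β) (Or.inl hz.ne')
  have := (((h1.const_mul a).sub h2).add ((hasDerivAt_id z).const_mul (1 + a))).sub_const (2 * a)
  unfold P
  simpa [P, mul_one] using this

lemma P_deriv_pos {a β z : ℝ} (ha : 1 < a) (hβ : 1 < β) (hz : 0 < z) :
    0 < a * ((β + 1) * z ^ β) - β * z ^ (β - 1) + (1 + a) := by
  have hy := young_aux hβ hz
  have hzb : 0 < z ^ β := Real.rpow_pos_of_pos hz β
  have key : 0 < (a * β + a - β + 1) * z ^ β := mul_pos (by nlinarith) hzb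
  nlinarith [hy, key]

theorem P_strictMono_unique_root (a β : ℝ) (ha : 1 < a) (hβ : 1 < β) :
    StrictMonoOn (P a β) (Set.Ioi 0) ∧ (∀ z : ℝ, 0 < z → (P a β z = 0 ↔ z = 1)) := by
  have hmono : StrictMonoOn (P a β) (Set.Ioi 0) := by
    apply strictMonoOn_of_deriv_pos (convex_Ioi 0)
    · intro x hx
      exact (P_hasDerivAt hβ hx).continuousAt.continuousWithinAt
    · intro x hx
      rw [interior_Ioi] at hx
      rw [(P_hasDerivAt hβ hx).deriv]
      exact P_deriv_pos ha hβ hx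
  have hP1 : P a β 1 = 0 := by
    simp [P, Real.one_rpow]; ring
  refine ⟨hmono, fun z hz => ⟨fun h => ?_, fun h => h ▸ hP1⟩⟩
  by_contra hne
  rcases lt_or_gt_of_ne hne with h1 | h1
  · have := hmono (Set.mem_Ioi.mpr hz) (Set.mem_Ioi.mpr one_pos) h1
    rw [h, hP1] at this; exact lt_irrefl 0 this
  · have := hmono (Set.mem_Ioi.mpr one_pos) (Set.mem_Ioi.mpr hz) h1
    rw [h, hP1] at this; exact lt_irrefl 0 this
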